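/- Let 𝒜 be a central, essential arrangement of hyperplanes in ℝ^d, let v ∈ ℝ^d be nonzero, and let H_v be the affine hyperplane through v normal to v. Suppose H_v is generic with respect to 𝒜 (meaning H_v meets every 1-dimensional subspace in the intersection lattice of 𝒜). Then for any region R (a connected component of the complement of the union of 𝒜), the set R ∩ H_v is nonempty and bounded if and only if ⟨v, x⟩ > 0 for all x ∈ R. -/

import Mathlib

open scoped RealInnerProductSpace

private lemma aux_small_step {c b τ : ℝ} (hc : 0 < c) (hτ : |τ| ≤ c / (|b| + 1)) :
    0 ≤ c + τ * b := by
  have hb : (0:ℝ) ≤ |b| := abs_nonneg b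
  have h1 : |τ| * (|b| + 1) ≤ c := (le_div_iff₀ (by linarith)).mp hτ
  have h2 : -(τ * b) ≤ |τ * b| := neg_le_abs _
  have h3 : |τ * b| = |τ| * |b| := abs_mul _ _
  nlinarith [abs_nonneg τ]

private lemma keyA {E : Type*} [NormedAddCommGroup E] [InnerProductSpace ℝ E]
    [FiniteDimensional ℝ E]
    (𝒜 : Finset (Submodule ℝ E)) (e : Submodule ℝ E → E)
    (hmem : ∀ W ∈ 𝒜, ∀ x : E, x ∈ W ↔ ⟪e W, x⟫ = 0)
    (hess : (⨅ W ∈ 𝒜, W : Submodule ℝ E) = ⊥)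
    (v : E) (hv : v ≠ 0)
    (hgen : ∀ s ⊆ 𝒜, Module.finrank ℝ (⨅ W ∈ s, W : Submodule ℝ E) = 1 →
      ({x | ⟪v, x⟫ = ⟪v, v⟫} ∩ ((⨅ W ∈ s, W : Submodule ℝ E) : Set E)).Nonempty)
    (hpos : ∀ y : E, (∀ W ∈ 𝒜, 0 ≤ ⟪e W, y⟫) → 0 ≤ ⟪v, y⟫)
    (u : E) (hu : ∀ W ∈ 𝒜, 0 ≤ ⟪e W, u⟫) (huv : ⟪v, u⟫ = 0) : u = 0 := by
  classical
  have hvv : 0 < ⟪v, v⟫ := by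
    rw [real_inner_self_eq_norm_sq]
    have := norm_pos_iff.mpr hv
    positivity
  suffices H : ∀ n : ℕ, ∀ u : E, (∀ W ∈ 𝒜, 0 ≤ ⟪e W, u⟫) → ⟪v, u⟫ = 0 →
      (𝒜.filter fun W => u ∉ W).card = n → u = 0 by
    exact H _ u hu huv rfl
  intro n
  induction n using Nat.strong_induction_on with
  | _ n ih =>
    intro u hu huv hcard
    by_contra hne
    -- the flat X spanned by the walls containing u
    set s : Finset (Submodule ℝ E) := 𝒜.filter (fun W => u ∈ W) with hs
    set t : Finset (Submodule ℝ E) := 𝒜.filter (fun W => u ∉ W) with ht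
    set X : Submodule ℝ E := (⨅ W ∈ s, W) with hX
    have hsub : s ⊆ 𝒜 := Finset.filter_subset _ _
    have huX : u ∈ X := by
      simp only [hX, Submodule.mem_iInf]
      intro W hW
      exact (Finset.mem_filter.mp hW).2
    have htne : t.Nonempty := by
      rcases Finset.eq_empty_or_nonempty t with h | h
      · exfalso
        apply hne
        have : u ∈ (⨅ W ∈ 𝒜, W : Submodule ℝ E) := by
          simp only [Submodule.mem_iInf]
          intro W hW
          by_contra hnW
          have : W ∈ t := Finset.mem_filter.mpr ⟨hW, hnW⟩
          simp [h] at this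
        rw [hess] at this
        simpa using this
      · exact h
    have htpos : ∀ W ∈ t, 0 < ⟪e W, u⟫ := by
      intro W hW
      rcases Finset.mem_filter.mp hW with ⟨hW𝒜, hWu⟩
      rcases lt_or_eq_of_le (hu W hW𝒜) with h | h
      · exact h
      · exact absurd ((hmem W hW𝒜 u).mpr h.symm) hWu
    have hszero : ∀ W ∈ s, ⟪e W, u⟫ = 0 := by
      intro W hW
      rcases Finset.mem_filter.mp hW with ⟨hW𝒜, hWu⟩
      exact (hmem W hW𝒜 u).mp hWu
    by_cases hrk : Module.finrank ℝ X = 1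
    · -- 1-dimensional flat: genericity contradiction
      obtain ⟨y, hyH, hyX⟩ := hgen s hsub hrk
      have hspan : Submodule.span ℝ {u} = X := by
        apply Submodule.eq_of_le_of_finrank_le
        · exact (Submodule.span_singleton_le_iff_mem _ _).mpr huX
        · rw [hrk, finrank_span_singleton hne]
      have hyX' : y ∈ X := hyX
      rw [← hspan] at hyX'
      obtain ⟨c, hc⟩ := Submodule.mem_span_singleton.mp hyX'
      have : ⟪v, y⟫ = 0 := by
        rw [← hc, real_inner_smul_right, huv, mul_zero]
      rw [Set.mem_setOf_eq] at hyH
      rw [hyH] at this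
      exact absurd this (ne_of_gt hvv)
    · -- X has dimension ≥ 2; find an escape direction
      have hwex : ∃ w, w ∈ X ∧ w ∉ Submodule.span ℝ {u} := by
        by_contra hcon
        push_neg at hcon
        have hle : X ≤ Submodule.span ℝ {u} := fun w hw => hcon w hw
        have : X = Submodule.span ℝ {u} :=
          le_antisymm hle ((Submodule.span_singleton_le_iff_mem _ _).mpr huX)
        rw [this, finrank_span_singleton hne] at hrk
        exact hrk rfl
      obtain ⟨w₀, hw₀X, hw₀span⟩ := hwex
      have hXzero : ∀ w ∈ X, ∀ W ∈ s, ⟪e W, w⟫ = 0 := by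
        intro w hw W hW
        have : w ∈ W := by
          simp only [hX, Submodule.mem_iInf] at hw
          exact hw W hW
        exact (hmem W (hsub hW) w).mp this
      -- main step given a direction w in X, orthogonal to v, that exits the cone
      have main : ∀ w : E, w ∈ X → w ∉ Submodule.span ℝ {u} → ⟪v, w⟫ = 0 →
          (∃ W ∈ t, ⟪e W, w⟫ < 0) → False := by
        intro w hwX hwspan hvw ⟨W₁, hW₁t, hW₁⟩
        set F : Finset (Submodule ℝ E) := t.filter (fun W => ⟪e W, w⟫ < 0) with hF
        have hFne : F.Nonempty := ⟨W₁, Finset.mem_filter.mpr ⟨hW₁t, hW₁⟩⟩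
        set τ : ℝ := F.inf' hFne (fun W => ⟪e W, u⟫ / (-⟪e W, w⟫)) with hτ
        have hτpos : 0 < τ := by
          rw [hτ, Finset.lt_inf'_iff]
          intro W hW
          rcases Finset.mem_filter.mp hW with ⟨hWt, hWw⟩
          exact div_pos (htpos W hWt) (by linarith)
        obtain ⟨W₀, hW₀F, hW₀eq⟩ := Finset.exists_mem_eq_inf' hFne
          (fun W => ⟪e W, u⟫ / (-⟪e W, w⟫))
        rcases Finset.mem_filter.mp hW₀F with ⟨hW₀t, hW₀w⟩
        set u' : E := u + τ • w with hu'
        have hinner : ∀ W, ⟪e W, u'⟫ = ⟪e W, u⟫ + τ * ⟪e W, w⟫ := by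
          intro W
          rw [hu', inner_add_right, real_inner_smul_right]
        have hu'mem : ∀ W ∈ 𝒜, 0 ≤ ⟪e W, u'⟫ := by
          intro W hW
          rw [hinner]
          by_cases hWu : u ∈ W
          · rw [hszero W (Finset.mem_filter.mpr ⟨hW, hWu⟩),
              hXzero w hwX W (Finset.mem_filter.mpr ⟨hW, hWu⟩), mul_zero, add_zero]
          · have hWt : W ∈ t := Finset.mem_filter.mpr ⟨hW, hWu⟩
            by_cases hWw : ⟪e W, w⟫ < 0
            · have hWF : W ∈ F := Finset.mem_filter.mpr ⟨hWt, hWw⟩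
              have h1 : τ ≤ ⟪e W, u⟫ / (-⟪e W, w⟫) := by
                rw [hτ]; exact Finset.inf'_le _ hWF
              have h2 : τ * (-⟪e W, w⟫) ≤ ⟪e W, u⟫ :=
                (le_div_iff₀ (by linarith)).mp h1
              nlinarith
            · push_neg at hWw
              have := htpos W hWt
              nlinarith
        have hW₀zero : ⟪e W₀, u'⟫ = 0 := by
          have hτval : τ = ⟪e W₀, u⟫ / (-⟪e W₀, w⟫) := hτ.trans hW₀eq
          have hbne : ⟪e W₀, w⟫ ≠ 0 := ne_of_lt hW₀w
          rw [hinner, hτval]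
          have hkey : ⟪e W₀, u⟫ / -⟪e W₀, w⟫ * ⟪e W₀, w⟫ = -⟪e W₀, u⟫ := by
            rw [div_neg, neg_mul, div_mul_cancel₀ _ hbne]
          linarith
        have hu'W₀ : u' ∈ W₀ := (hmem W₀ (Finset.filter_subset _ _ hW₀t) u').mpr hW₀zero
        have hu'v : ⟪v, u'⟫ = 0 := by
          rw [hu', inner_add_right, real_inner_smul_right, huv, hvw, mul_zero, add_zero]
        have hu'ne : u' ≠ 0 := by
          intro h
          apply hwspan
          rw [hu'] at h
          have hτne : τ ≠ 0 := ne_of_gt hτpos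
          have h1 : τ • w = -u := eq_neg_of_add_eq_zero_right h
          have h2 : w = τ⁻¹ • (-u) := by
            rw [← h1, smul_smul, inv_mul_cancel₀ hτne, one_smul]
          rw [h2]
          exact Submodule.smul_mem _ _
            (Submodule.neg_mem _ (Submodule.mem_span_singleton_self u))
        -- the set of walls not containing u' is strictly smaller
        have hcardlt : (𝒜.filter fun W => u' ∉ W).card < n := by
          rw [← hcard]
          apply Finset.card_lt_card
          constructor
          · intro W hW
            rcases Finset.mem_filter.mp hW with ⟨hW𝒜, hWu'⟩
            refine Finset.mem_filter.mpr ⟨hW𝒜, ?_⟩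
            intro hWu
            apply hWu'
            have hs' : W ∈ s := Finset.mem_filter.mpr ⟨hW𝒜, hWu⟩
            rw [hmem W hW𝒜, hinner, hszero W hs', hXzero w hwX W hs', mul_zero, add_zero]
          · intro hsub'
            have hW₀in : W₀ ∈ 𝒜.filter fun W => u ∉ W := hW₀t
            have := hsub' hW₀in
            rcases Finset.mem_filter.mp this with ⟨_, h⟩
            exact h hu'W₀
        exact absurd (ih _ hcardlt u' hu'mem hu'v rfl) hu'ne
      -- now case-split on w₀
      by_cases hvw : ⟪v, w₀⟫ = 0
      · by_cases hEx : (∃ W ∈ t, ⟪e W, w₀⟫ < 0)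
        · exact main w₀ hw₀X hw₀span hvw hEx
        · by_cases hEx' : (∃ W ∈ t, ⟪e W, -w₀⟫ < 0)
          · apply main (-w₀) (Submodule.neg_mem _ hw₀X) ?_ (by rw [inner_neg_right, hvw, neg_zero]) hEx'
            intro h
            exact hw₀span (by simpa using Submodule.neg_mem _ h)
          · -- w₀ is orthogonal to every wall: contradiction with essentiality
            push_neg at hEx hEx'
            have hzero : ∀ W ∈ 𝒜, ⟪e W, w₀⟫ = 0 := by
              intro W hW
              by_cases hWu : u ∈ W
              · exact hXzero w₀ hw₀X W (Finset.mem_filter.mpr ⟨hW, hWu⟩)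
              · have hWt : W ∈ t := Finset.mem_filter.mpr ⟨hW, hWu⟩
                have h1 := hEx W hWt
                have h2 := hEx' W hWt
                rw [inner_neg_right] at h2
                linarith
            have : w₀ ∈ (⨅ W ∈ 𝒜, W : Submodule ℝ E) := by
              simp only [Submodule.mem_iInf]
              intro W hW
              exact (hmem W hW w₀).mpr (hzero W hW)
            rw [hess] at this
            have : w₀ = 0 := by simpa using this
            exact hw₀span (this ▸ Submodule.zero_mem _)
      · -- ⟪v,w₀⟫ ≠ 0 : move slightly against v, contradicting hpos
        set δ : ℝ := t.inf' htne (fun W => ⟪e W, u⟫ / (|⟪e W, w₀⟫| + 1)) with hδ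
        have hδpos : 0 < δ := by
          rw [hδ, Finset.lt_inf'_iff]
          intro W hW
          exact div_pos (htpos W hW) (by positivity)
        set τ : ℝ := if 0 < ⟪v, w₀⟫ then -δ else δ with hτdef
        have hτabs : |τ| = δ := by
          rw [hτdef]
          split_ifs
          · rw [abs_neg, abs_of_pos hδpos]
          · rw [abs_of_pos hδpos]
        have hτneg : τ * ⟪v, w₀⟫ < 0 := by
          rw [hτdef]
          split_ifs with h
          · nlinarith
          · push_neg at h
            have : ⟪v, w₀⟫ < 0 := lt_of_le_of_ne h hvw
            nlinarith
        have hy : ∀ W ∈ 𝒜, 0 ≤ ⟪e W, u + τ • w₀⟫ := by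
          intro W hW
          rw [inner_add_right, real_inner_smul_right]
          by_cases hWu : u ∈ W
          · rw [hszero W (Finset.mem_filter.mpr ⟨hW, hWu⟩),
              hXzero w₀ hw₀X W (Finset.mem_filter.mpr ⟨hW, hWu⟩), mul_zero, add_zero]
          · have hWt : W ∈ t := Finset.mem_filter.mpr ⟨hW, hWu⟩
            apply aux_small_step (htpos W hWt)
            rw [hτabs, hδ]
            exact Finset.inf'_le _ hWt
        have := hpos _ hy
        rw [inner_add_right, real_inner_smul_right, huv, zero_add] at this
        linarith

/-- Let `𝒜` be a central, essential arrangement of (linear) hyperplanes in `ℝ^d`,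
`v ≠ 0`, and let `H_v = {x : ⟪v,x⟫ = ⟪v,v⟫}` be the affine hyperplane through `v`
normal to `v`.  Assume `H_v` is generic with respect to `𝒜`, i.e. it meets every
`1`-dimensional intersection of hyperplanes of `𝒜`.  Then for any region `R`
(a connected component of the complement of `⋃𝒜`), the slice `R ∩ H_v` is
nonempty and bounded if and only if `⟪v, x⟫ > 0` for all `x ∈ R`. -/
theorem region_slice_bounded_iff_pos {d : ℕ}
    (𝒜 : Finset (Submodule ℝ (EuclideanSpace ℝ (Fin d))))
    (hhyp : ∀ W ∈ 𝒜, Module.finrank ℝ W = d - 1 ∧ W ≠ ⊤)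
    (hess : (⨅ W ∈ 𝒜, W : Submodule ℝ (EuclideanSpace ℝ (Fin d))) = ⊥)
    (v : EuclideanSpace ℝ (Fin d)) (hv : v ≠ 0)
    (hgen : ∀ s ⊆ 𝒜, Module.finrank ℝ (⨅ W ∈ s, W : Submodule ℝ (EuclideanSpace ℝ (Fin d))) = 1 →
      ({x | ⟪v, x⟫ = ⟪v, v⟫} ∩
        ((⨅ W ∈ s, W : Submodule ℝ (EuclideanSpace ℝ (Fin d))) : Set _)).Nonempty)
    (x₀ : EuclideanSpace ℝ (Fin d)) (hx₀ : ∀ W ∈ 𝒜, x₀ ∉ W)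
    (R : Set (EuclideanSpace ℝ (Fin d)))
    (hR : R = connectedComponentIn {x | ∀ W ∈ 𝒜, x ∉ W} x₀) :
    ((R ∩ {x | ⟪v, x⟫ = ⟪v, v⟫}).Nonempty ∧
        Bornology.IsBounded (R ∩ {x | ⟪v, x⟫ = ⟪v, v⟫})) ↔
      ∀ x ∈ R, 0 < ⟪v, x⟫ := by
  classical
  have hvv : 0 < ⟪v, v⟫ := by
    rw [real_inner_self_eq_norm_sq]
    have := norm_pos_iff.mpr hv
    positivity
  -- d = 0 is impossible
  rcases Nat.eq_zero_or_pos d with hd0 | hd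
  · exfalso
    apply hv
    have h0 : Module.finrank ℝ (EuclideanSpace ℝ (Fin d)) = 0 := by
      rw [finrank_euclideanSpace_fin, hd0]
    haveI : Subsingleton (EuclideanSpace ℝ (Fin d)) := Module.finrank_zero_iff.mp h0
    exact Subsingleton.elim v 0
  -- 𝒜 is nonempty
  have h𝒜 : 𝒜.Nonempty := by
    rcases Finset.eq_empty_or_nonempty 𝒜 with h | h
    · exfalso
      apply hv
      rw [h] at hess
      have : v ∈ (⨅ W ∈ (∅ : Finset (Submodule ℝ (EuclideanSpace ℝ (Fin d)))), W :
          Submodule ℝ (EuclideanSpace ℝ (Fin d))) := by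
        simp [Submodule.mem_iInf]
      rw [hess] at this
      simpa using this
    · exact h
  -- choose inward-pointing normal vectors
  have hnormal : ∀ W : Submodule ℝ (EuclideanSpace ℝ (Fin d)), ∃ eW,
      W ∈ 𝒜 → ((∀ x, x ∈ W ↔ ⟪eW, x⟫ = 0) ∧ 0 < ⟪eW, x₀⟫) := by
    intro W
    by_cases hW : W ∈ 𝒜
    · obtain ⟨hrk, -⟩ := hhyp W hW
      have hfin : Module.finrank ℝ Wᗮ = 1 := by
        have h := Submodule.finrank_add_finrank_orthogonal W
        rw [hrk, finrank_euclideanSpace_fin] at h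
        omega
      have hWne : Wᗮ ≠ ⊥ := by
        intro h
        rw [h] at hfin
        simp [finrank_bot] at hfin
      obtain ⟨n, hn, hn0⟩ := Submodule.exists_mem_ne_zero_of_ne_bot hWne
      have hspan : Submodule.span ℝ {n} = Wᗮ := by
        apply Submodule.eq_of_le_of_finrank_le
        · exact (Submodule.span_singleton_le_iff_mem _ _).mpr hn
        · rw [hfin, finrank_span_singleton hn0]
      have hmemW : ∀ x, x ∈ W ↔ ⟪n, x⟫ = 0 := by
        intro x
        constructor
        · intro hx
          have := (Submodule.mem_orthogonal W n).mp hn x hx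
          rwa [real_inner_comm] at this
        · intro hx
          have hxW : x ∈ Wᗮᗮ := by
            rw [Submodule.mem_orthogonal]
            intro z hz
            rw [← hspan] at hz
            obtain ⟨c, hc⟩ := Submodule.mem_span_singleton.mp hz
            rw [← hc, real_inner_smul_left, hx, mul_zero]
          rwa [Submodule.orthogonal_orthogonal] at hxW
      have hx0n : ⟪n, x₀⟫ ≠ 0 := fun h => hx₀ W hW ((hmemW x₀).mpr h)
      by_cases hsgn : 0 < ⟪n, x₀⟫
      · exact ⟨n, fun _ => ⟨hmemW, hsgn⟩⟩
      · push_neg at hsgn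
        refine ⟨-n, fun _ => ⟨?_, ?_⟩⟩
        · intro x
          rw [hmemW x, inner_neg_left, neg_eq_zero]
        · rw [inner_neg_left]
          have := lt_of_le_of_ne hsgn hx0n
          linarith
    · exact ⟨0, fun h => absurd h hW⟩
  choose e he using hnormal
  have hmem : ∀ W ∈ 𝒜, ∀ x, x ∈ W ↔ ⟪e W, x⟫ = 0 := fun W hW => (he W hW).1
  have hpos₀ : ∀ W ∈ 𝒜, 0 < ⟪e W, x₀⟫ := fun W hW => (he W hW).2
  subst hR
  set U : Set (EuclideanSpace ℝ (Fin d)) := {x | ∀ W ∈ 𝒜, x ∉ W} with hU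
  set C : Set (EuclideanSpace ℝ (Fin d)) := {x | ∀ W ∈ 𝒜, 0 < ⟪e W, x⟫} with hC
  have hCU : C ⊆ U := by
    intro x hx W hW hxW
    exact absurd ((hmem W hW x).mp hxW) (ne_of_gt (hx W hW))
  have hx₀C : x₀ ∈ C := fun W hW => hpos₀ W hW
  have hx₀U : x₀ ∈ U := hx₀
  have hCconv : Convex ℝ C := by
    intro x hx y hy a b ha hb hab
    intro W hW
    have hx' := hx W hW
    have hy' := hy W hW
    rw [inner_add_right, real_inner_smul_right, real_inner_smul_right]
    nlinarith [mul_le_mul_of_nonneg_left (min_le_left ⟪e W, x⟫ ⟪e W, y⟫) ha,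
      mul_le_mul_of_nonneg_left (min_le_right ⟪e W, x⟫ ⟪e W, y⟫) hb,
      lt_min hx' hy']
  have hRC : connectedComponentIn U x₀ = C := by
    apply Set.Subset.antisymm
    · intro x hx W hW
      have hcont : Continuous fun z : EuclideanSpace ℝ (Fin d) => ⟪e W, z⟫ :=
        Continuous.inner continuous_const continuous_id
      have hsub1 : connectedComponentIn U x₀ ⊆ {z | 0 < ⟪e W, z⟫} := by
        refine IsPreconnected.subset_left_of_subset_union
          (u := {z : EuclideanSpace ℝ (Fin d) | 0 < ⟪e W, z⟫})
          (v := {z : EuclideanSpace ℝ (Fin d) | ⟪e W, z⟫ < 0})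
          (isOpen_lt continuous_const hcont) (isOpen_lt hcont continuous_const)
          ?_ ?_ ?_ isPreconnected_connectedComponentIn
        · rw [Set.disjoint_left]
          intro z hz hz'
          rw [Set.mem_setOf_eq] at hz hz'
          exact absurd hz (not_lt.mpr (le_of_lt hz'))
        · intro z hz
          have hzU : z ∈ U := connectedComponentIn_subset U x₀ hz
          have hne0 : ⟪e W, z⟫ ≠ 0 := fun h => hzU W hW ((hmem W hW z).mpr h)
          rcases hne0.lt_or_gt with h | h
          · exact Or.inr h
          · exact Or.inl h
        · exact ⟨x₀, mem_connectedComponentIn hx₀U, hpos₀ W hW⟩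
      exact hsub1 hx
    · exact hCconv.isPreconnected.subset_connectedComponentIn hx₀C hCU
  rw [hRC]
  constructor
  · -- nonempty and bounded ⇒ positive on the region
    rintro ⟨⟨y, hyC, hyH⟩, hbdd⟩
    rw [Set.mem_setOf_eq] at hyH
    have hnz : ∀ x ∈ C, ⟪v, x⟫ ≠ 0 := by
      intro x hxC hx0
      obtain ⟨M, hM⟩ := isBounded_iff_forall_norm_le.mp hbdd
      have hxne : x ≠ 0 := by
        intro h
        obtain ⟨W, hW⟩ := h𝒜
        have := hxC W hW
        rw [h, inner_zero_right] at this
        exact lt_irrefl 0 this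
      have hxn : 0 < ‖x‖ := norm_pos_iff.mpr hxne
      obtain ⟨n, hn⟩ := exists_nat_gt ((M + ‖y‖) / ‖x‖)
      set z := y + (n : ℝ) • x with hz
      have hzC : z ∈ C := by
        intro W hW
        rw [hz, inner_add_right, real_inner_smul_right]
        have h1 := hyC W hW
        have h2 := hxC W hW
        have h3 : (0:ℝ) ≤ (n:ℝ) := Nat.cast_nonneg n
        nlinarith
      have hzH : ⟪v, z⟫ = ⟪v, v⟫ := by
        rw [hz, inner_add_right, real_inner_smul_right, hx0, mul_zero, add_zero, hyH]
      have hMz : ‖z‖ ≤ M := hM z ⟨hzC, hzH⟩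
      have h4 : z - y = (n : ℝ) • x := by rw [hz]; abel
      have h5 : (n : ℝ) * ‖x‖ ≤ ‖z‖ + ‖y‖ := by
        calc (n : ℝ) * ‖x‖ = ‖(n : ℝ) • x‖ := by
              rw [norm_smul, Real.norm_natCast]
          _ = ‖z - y‖ := by rw [h4]
          _ ≤ ‖z‖ + ‖y‖ := norm_sub_le z y
      have h6 : M + ‖y‖ < (n : ℝ) * ‖x‖ := (div_lt_iff₀ hxn).mp hn
      linarith
    intro x hxC
    rcases lt_trichotomy ⟪v, x⟫ 0 with hlt | heq | hgt
    · exfalso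
      set p := ⟪v, x⟫ with hp
      set q := ⟪v, v⟫ with hq
      have hdmaj : p - q < 0 := by linarith
      set τ := p / (p - q) with hτ
      have hτval : τ * (p - q) = p := div_mul_cancel₀ _ (ne_of_lt hdmaj)
      have hτ0 : 0 < τ := div_pos_of_neg_of_neg hlt hdmaj
      have hτ1 : τ < 1 := by nlinarith
      have hzC : (1 - τ) • x + τ • y ∈ C :=
        hCconv hxC hyC (by linarith) (by linarith) (by ring)
      have : ⟪v, (1 - τ) • x + τ • y⟫ = 0 := by
        rw [inner_add_right, real_inner_smul_right, real_inner_smul_right, hyH]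
        linear_combination -hτval
      exact hnz _ hzC this
    · exact absurd heq (hnz x hxC)
    · exact hgt
  · -- positive on the region ⇒ nonempty and bounded
    intro hposC
    have hx₀pos := hposC x₀ hx₀C
    have hCbpos : ∀ y : EuclideanSpace ℝ (Fin d), (∀ W ∈ 𝒜, 0 ≤ ⟪e W, y⟫) → 0 ≤ ⟪v, y⟫ := by
      intro y hy
      by_contra hneg
      push_neg at hneg
      set τ := -⟪v, y⟫ / (2 * ⟪v, x₀⟫) with hτ
      have hτpos : 0 < τ := div_pos (by linarith) (by linarith)
      have hmemC : y + τ • x₀ ∈ C := by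
        intro W hW
        rw [inner_add_right, real_inner_smul_right]
        have h1 := hy W hW
        have h2 := hpos₀ W hW
        nlinarith
      have hval : τ * ⟪v, x₀⟫ = -⟪v, y⟫ / 2 := by
        have hbne : ⟪v, x₀⟫ ≠ 0 := ne_of_gt hx₀pos
        rw [hτ, div_mul_eq_mul_div, mul_comm (2 : ℝ) ⟪v, x₀⟫, ← div_div, mul_div_assoc,
          div_self hbne, mul_one]
      have := hposC _ hmemC
      rw [inner_add_right, real_inner_smul_right, hval] at this
      linarith
    constructor
    · refine ⟨(⟪v, v⟫ / ⟪v, x₀⟫) • x₀, ?_, ?_⟩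
      · intro W hW
        rw [real_inner_smul_right]
        exact mul_pos (div_pos hvv hx₀pos) (hpos₀ W hW)
      · rw [Set.mem_setOf_eq, real_inner_smul_right, div_mul_cancel₀ _ (ne_of_gt hx₀pos)]
    · by_contra hnb
      rw [isBounded_iff_forall_norm_le] at hnb
      push_neg at hnb
      have hseq : ∀ n : ℕ, ∃ z, z ∈ C ∩ {x | ⟪v, x⟫ = ⟪v, v⟫} ∧ ((n : ℝ) + 1) < ‖z‖ := by
        intro n
        obtain ⟨z, hz, hz'⟩ := hnb ((n : ℝ) + 1)
        exact ⟨z, hz, hz'⟩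
      choose z hzS hzn using hseq
      have hznorm : ∀ n, 0 < ‖z n‖ := fun n => lt_of_le_of_lt (by positivity) (hzn n)
      set y : ℕ → EuclideanSpace ℝ (Fin d) := fun n => ‖z n‖⁻¹ • z n with hy
      have hy1 : ∀ n, y n ∈ Metric.sphere (0 : EuclideanSpace ℝ (Fin d)) 1 := by
        intro n
        rw [mem_sphere_zero_iff_norm, hy]
        simp only [norm_smul, norm_inv, norm_norm]
        rw [inv_mul_cancel₀ (ne_of_gt (hznorm n))]
      obtain ⟨a, haS, φ, hφ, hconv⟩ :=
        (isCompact_sphere (0 : EuclideanSpace ℝ (Fin d)) 1).tendsto_subseq hy1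
      have ha1 : ‖a‖ = 1 := mem_sphere_zero_iff_norm.mp haS
      have haCb : ∀ W ∈ 𝒜, 0 ≤ ⟪e W, a⟫ := by
        intro W hW
        have htend : Filter.Tendsto (fun k => ⟪e W, y (φ k)⟫) Filter.atTop (nhds ⟪e W, a⟫) :=
          Filter.Tendsto.inner tendsto_const_nhds hconv
        apply ge_of_tendsto htend
        apply Filter.Eventually.of_forall
        intro k
        rw [hy]
        simp only [real_inner_smul_right]
        exact le_of_lt (mul_pos (inv_pos.mpr (hznorm _)) ((hzS (φ k)).1 W hW))
      have havz : ⟪v, a⟫ = 0 := by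
        have htend : Filter.Tendsto (fun k => ⟪v, y (φ k)⟫) Filter.atTop (nhds ⟪v, a⟫) :=
          Filter.Tendsto.inner tendsto_const_nhds hconv
        have htend0 : Filter.Tendsto (fun k => ⟪v, y (φ k)⟫) Filter.atTop (nhds 0) := by
          apply squeeze_zero_norm' (a := fun k : ℕ => ⟪v, v⟫ / ((k : ℝ) + 1))
          · apply Filter.Eventually.of_forall
            intro k
            have hzH : ⟪v, z (φ k)⟫ = ⟪v, v⟫ := (hzS (φ k)).2
            rw [hy]
            simp only [real_inner_smul_right]
            rw [hzH, Real.norm_eq_abs, abs_of_nonneg (by positivity)]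
            have h2 : ((k : ℝ) + 1) ≤ ‖z (φ k)‖ := by
              have : ((k : ℝ) + 1) ≤ ((φ k : ℝ) + 1) := by
                have hk : k ≤ φ k := hφ.le_apply
                have hk' : (k : ℝ) ≤ (φ k : ℝ) := Nat.cast_le.mpr hk
                linarith
              linarith [hzn (φ k)]
            rw [inv_mul_eq_div]
            apply div_le_div_of_nonneg_left (le_of_lt hvv) (by positivity) h2
          · have h2 := (tendsto_const_div_atTop_nhds_zero_nat ⟪v, v⟫).comp
              (Filter.tendsto_add_atTop_nat 1)
            have h3 : (fun k : ℕ => ⟪v, v⟫ / ((k : ℝ) + 1)) =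
                (fun n : ℕ => ⟪v, v⟫ / (n : ℝ)) ∘ (fun n => n + 1) := by
              funext k
              simp only [Function.comp_apply]
              push_cast
              ring
            rw [h3]
            exact h2
        exact tendsto_nhds_unique htend htend0
      have h0 := keyA 𝒜 e hmem hess v hv hgen hCbpos a haCb havz
      rw [h0, norm_zero] at ha1
      exact one_ne_zero ha1.symm
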